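/- Let Λ be a self-adjoint operator on a real Hilbert space H with spectrum contained in [−1, 1], and let V ∈ H. Suppose there is a constant C₀ < ∞ such that |⟨f, V⟩| ≤ C₀ ⟨f, (1 − Λ)f⟩^{1/2} for all f ∈ H. Then the spectral measure μ_V of Λ associated with V satisfies ∫_{[−1,1]} (1 − λ)^{−1} dμ_V(λ) ≤ C₀². -/

import Mathlib

open MeasureTheory
open scoped RealInnerProductSpace

section KVaux

open Polynomial Finset Filter

lemma KV_pow_symm {H : Type*} [NormedAddCommGroup H] [InnerProductSpace ℝ H] [CompleteSpace H]
    (Λ : H →L[ℝ] H) (hΛ : IsSelfAdjoint Λ) (n : ℕ) (v w : H) :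
    ⟪(Λ ^ n) v, w⟫ = ⟪v, (Λ ^ n) w⟫ := by
  induction n generalizing w with
  | zero => simp
  | succ k ih =>
    have h1 : (Λ ^ (k+1)) v = Λ ((Λ ^ k) v) := by rw [pow_succ']; rfl
    have h2 : (Λ ^ (k+1)) w = (Λ ^ k) (Λ w) := by rw [pow_succ]; rfl
    have hs := hΛ.isSymmetric ((Λ ^ k) v) w
    simp only [ContinuousLinearMap.coe_coe] at hs
    rw [h1, h2, hs, ih (Λ w)]

lemma KV_aeval_symm {H : Type*} [NormedAddCommGroup H] [InnerProductSpace ℝ H] [CompleteSpace H]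
    (Λ : H →L[ℝ] H) (hΛ : IsSelfAdjoint Λ) (p : Polynomial ℝ) (v w : H) :
    ⟪Polynomial.aeval Λ p v, w⟫ = ⟪v, Polynomial.aeval Λ p w⟫ := by
  induction p using Polynomial.induction_on' with
  | add f g hf hg => simp [map_add, inner_add_left, inner_add_right, hf, hg]
  | monomial n a =>
    have hv : (Polynomial.aeval Λ (Polynomial.monomial n a)) v = a • ((Λ ^ n) v) := by
      simp [Polynomial.aeval_monomial, Algebra.algebraMap_eq_smul_one]
    have hw : (Polynomial.aeval Λ (Polynomial.monomial n a)) w = a • ((Λ ^ n) w) := by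
      simp [Polynomial.aeval_monomial, Algebra.algebraMap_eq_smul_one]
    rw [hv, hw, inner_smul_left, inner_smul_right, KV_pow_symm Λ hΛ]
    simp

/-- Pointwise facts for the geometric sum. -/
lemma KV_geom_facts (r l : ℝ) (n : ℕ) (hr0 : 0 < r) (hr1 : r < 1) (hn : 1 ≤ n)
    (hl : l ∈ Set.Icc (-1:ℝ) 1) (M : ℝ) (hM : 1 ≤ M) :
    0 ≤ ∑ i ∈ range n, (r*l)^i ∧
    (1-l) * (∑ i ∈ range n, (r*l)^i) * (∑ i ∈ range n, (r*l)^i)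
      ≤ (2*(1+r^n)/(1+r)) * (∑ i ∈ range n, (r*l)^i) ∧
    (max (1-l) M⁻¹)⁻¹ ≤ ((1+(1-r)*M)/(1-r^n)) * (∑ i ∈ range n, (r*l)^i) := by
  obtain ⟨hl1, hl2⟩ := hl
  set y := r * l with hy
  set g := ∑ i ∈ range n, y^i with hg
  have hgeom : (1 - y) * g = 1 - y^n := by
    have := geom_sum_mul y n
    rw [hg]; nlinarith [this]
  have hyabs : |y| ≤ r := by
    rw [hy, abs_mul, abs_of_pos hr0]
    nlinarith [abs_le.mpr ⟨hl1, hl2⟩, hr0]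
  have hyr : -r ≤ y ∧ y ≤ r := abs_le.mp hyabs
  have hynabs : |y^n| ≤ r^n := by
    rw [abs_pow]; exact pow_le_pow_left₀ (abs_nonneg y) hyabs n
  have hyn := abs_le.mp hynabs
  have hrn : r^n < 1 := pow_lt_one₀ hr0.le hr1 (by omega)
  have h1y : 0 < 1 - y := by nlinarith
  have hgpos : 0 < g := by nlinarith
  have key1 : (1+r) * (1-l) ≤ 2 * (1-y) := by nlinarith [(1-r)*(1+l)]
  refine ⟨hgpos.le, ?_, ?_⟩
  · have h2 : (1-l) * g ≤ 2*(1+r^n)/(1+r) := by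
      rw [le_div_iff₀ (by linarith : (0:ℝ) < 1+r)]
      nlinarith
    nlinarith
  · have hMpos : (0:ℝ) < M := by linarith
    set m := max (1-l) M⁻¹ with hm
    have hmpos : 0 < m := lt_max_of_lt_right (inv_pos.mpr hMpos)
    have hym : 1 - y ≤ (1+(1-r)*M) * m := by
      have h1 : 1 - l ≤ m := le_max_left _ _
      have h2 : M⁻¹ ≤ m := le_max_right _ _
      have h3 : (1-r) * M * M⁻¹ = 1 - r := by field_simp
      nlinarith [mul_le_mul_of_nonneg_left h2 (by nlinarith : (0:ℝ) ≤ (1-r)*M)]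
    rw [div_mul_eq_mul_div, le_div_iff₀ (by linarith : (0:ℝ) < 1 - r^n)]
    have e1 : m⁻¹ * (1 - r^n) ≤ m⁻¹ * ((1-y) * g) := by
      rw [hgeom]
      apply mul_le_mul_of_nonneg_left (by nlinarith) (inv_nonneg.mpr hmpos.le)
    have e2 : m⁻¹ * ((1-y) * g) ≤ m⁻¹ * ((1+(1-r)*M) * m * g) := by
      apply mul_le_mul_of_nonneg_left _ (inv_nonneg.mpr hmpos.le)
      exact mul_le_mul_of_nonneg_right hym hgpos.le
    have e3 : m⁻¹ * ((1+(1-r)*M) * m * g) = (1+(1-r)*M) * g := by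
      field_simp
    linarith

end KVaux

/-- Kipnis–Varadhan spectral bound: if `Λ` is self-adjoint with spectrum in
`[-1,1]`, `μ` is the spectral measure of `Λ` at `V` (characterized by its
action on polynomials), and `|⟨f,V⟩| ≤ C₀ ⟨f,(1-Λ)f⟩^{1/2}` for all `f`, then
`∫ (1-λ)⁻¹ dμ(λ) ≤ C₀²`. -/
theorem spectral_measure_inv_one_sub_integrable
    {H : Type*} [NormedAddCommGroup H] [InnerProductSpace ℝ H] [CompleteSpace H]
    (Λ : H →L[ℝ] H) (hΛ : IsSelfAdjoint Λ)
    (hspec : spectrum ℝ Λ ⊆ Set.Icc (-1 : ℝ) 1)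
    (V : H) (μ : Measure ℝ) [IsFiniteMeasure μ]
    (hsupp : μ (Set.Icc (-1 : ℝ) 1)ᶜ = 0)
    (hμ : ∀ p : Polynomial ℝ,
      ⟪V, Polynomial.aeval Λ p V⟫ = ∫ x, p.eval x ∂μ)
    (C₀ : ℝ) (hC₀ : 0 ≤ C₀)
    (hbound : ∀ f : H, |⟪f, V⟫| ≤ C₀ * Real.sqrt ⟪f, (1 - Λ) f⟫) :
    ∫⁻ l, (ENNReal.ofReal (1 - l))⁻¹ ∂μ ≤ ENNReal.ofReal (C₀ ^ 2) := by
  classical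
  open Polynomial Finset Filter in
  have hae : ∀ᵐ l ∂μ, l ∈ Set.Icc (-1:ℝ) 1 := by
    rw [MeasureTheory.ae_iff]
    convert hsupp using 2
    rfl
  -- integrability of polynomials against μ
  have intPoly : ∀ p : Polynomial ℝ, Integrable (fun x => p.eval x) μ := by
    intro p
    obtain ⟨Cb, hCb⟩ := (isCompact_Icc (a := (-1:ℝ)) (b := 1)).exists_bound_of_continuousOn
      p.continuous.continuousOn
    exact (integrable_const Cb).mono' p.continuous.aestronglyMeasurable
      (hae.mono fun x hx => hCb x hx)
  -- integrability of the truncated kernels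
  have hcont : ∀ M : ℝ, 0 < M → Continuous (fun x : ℝ => (max (1-x) M⁻¹)⁻¹) := by
    intro M hM
    exact Continuous.inv₀ ((continuous_const.sub continuous_id).max continuous_const)
      (fun x => ne_of_gt (lt_max_of_lt_right (inv_pos.mpr hM)))
  have hIntH : ∀ M : ℝ, 0 < M → Integrable (fun x : ℝ => (max (1-x) M⁻¹)⁻¹) μ := by
    intro M hM
    refine (integrable_const M).mono' (hcont M hM).aestronglyMeasurable (ae_of_all _ fun x => ?_)
    have hmpos : 0 < max (1-x) M⁻¹ := lt_max_of_lt_right (inv_pos.mpr hM)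
    rw [Real.norm_eq_abs, abs_of_pos (inv_pos.mpr hmpos)]
    calc (max (1-x) M⁻¹)⁻¹ ≤ (M⁻¹)⁻¹ :=
          inv_anti₀ (inv_pos.mpr hM) (le_max_right _ _)
      _ = M := inv_inv M
  -- the key real bound for each truncation level M
  have key : ∀ M : ℝ, 1 ≤ M → ∫ x, (max (1-x) M⁻¹)⁻¹ ∂μ ≤ C₀^2 := by
    intro M hM
    have step1 : ∀ r : ℝ, 0 < r → r < 1 → ∀ n : ℕ, 1 ≤ n →
        ∫ x, (max (1-x) M⁻¹)⁻¹ ∂μ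
          ≤ C₀^2 * (2*(1+r^n)/(1+r)) * ((1+(1-r)*M)/(1-r^n)) := by
      intro r hr0 hr1 n hn
      set q : Polynomial ℝ := ∑ i ∈ range n, Polynomial.C (r^i) * Polynomial.X^i with hq
      have hqeval : ∀ x : ℝ, q.eval x = ∑ i ∈ range n, (r*x)^i := by
        intro x
        rw [hq, Polynomial.eval_finset_sum]
        exact Finset.sum_congr rfl fun i _ => by simp [mul_pow]
      set f := Polynomial.aeval Λ q V with hf
      set A := ∫ x, q.eval x ∂μ with hA
      set K₁ := 2*(1+r^n)/(1+r) with hK₁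
      set K₂ := (1+(1-r)*M)/(1-r^n) with hK₂
      have hrn : r^n < 1 := pow_lt_one₀ hr0.le hr1 (by omega)
      have hK₁0 : 0 ≤ K₁ := by
        rw [hK₁]; positivity
      have hK₂0 : 0 ≤ K₂ := by
        rw [hK₂]
        apply div_nonneg _ (by linarith)
        nlinarith
      have hfV : ⟪f, V⟫ = A := by rw [hf, real_inner_comm, hμ q, hA]
      have hfQ : ⟪f, (1 - Λ) f⟫ = ∫ x, (q * ((1 - X) * q)).eval x ∂μ := by
        have h1 : (1 - Λ) f = Polynomial.aeval Λ ((1 - X) * q) V := by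
          rw [hf, map_mul]
          simp [ContinuousLinearMap.sub_apply]
        rw [h1, hf, KV_aeval_symm Λ hΛ, ← ContinuousLinearMap.mul_apply, ← map_mul, hμ]
      have hA0 : 0 ≤ A := by
        refine integral_nonneg_of_ae (hae.mono fun l hl => ?_)
        simp only [Pi.zero_apply]
        rw [hqeval]
        exact (KV_geom_facts r l n hr0 hr1 hn hl M hM).1
      have hBA : ∫ x, (q * ((1 - X) * q)).eval x ∂μ ≤ K₁ * A := by
        have := MeasureTheory.integral_const_mul (μ := μ) K₁ (fun x => q.eval x)
        rw [hA, ← this]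
        refine integral_mono_ae (intPoly _) ((intPoly q).const_mul K₁)
          (hae.mono fun l hl => ?_)
        have hg := (KV_geom_facts r l n hr0 hr1 hn hl M hM).2.1
        simp only [Polynomial.eval_mul, Polynomial.eval_sub, Polynomial.eval_one,
          Polynomial.eval_X, hqeval]
        rw [hK₁]
        nlinarith [hg]
      have hACK : A ≤ C₀^2 * K₁ := by
        have hb := hbound f
        rw [hfV] at hb
        have hAle : A ≤ C₀ * Real.sqrt ⟪f, (1 - Λ) f⟫ := (le_abs_self A).trans hb
        have hsq : Real.sqrt ⟪f, (1 - Λ) f⟫ ≤ Real.sqrt (K₁ * A) := by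
          apply Real.sqrt_le_sqrt
          rw [hfQ]; exact hBA
        have hAle2 : A ≤ C₀ * Real.sqrt (K₁ * A) :=
          hAle.trans (mul_le_mul_of_nonneg_left hsq hC₀)
        set s := Real.sqrt (K₁ * A) with hs
        have hs0 : 0 ≤ s := Real.sqrt_nonneg _
        have hs2 : s^2 = K₁ * A := Real.sq_sqrt (by positivity)
        rcases hA0.eq_or_lt with h | h
        · rw [← h]; positivity
        · nlinarith [sq_nonneg (A - C₀ * s)]
      have hHA : ∫ x, (max (1-x) M⁻¹)⁻¹ ∂μ ≤ K₂ * A := by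
        have := MeasureTheory.integral_const_mul (μ := μ) K₂ (fun x => q.eval x)
        rw [hA, ← this]
        refine integral_mono_ae (hIntH M (by linarith)) ((intPoly q).const_mul K₂)
          (hae.mono fun l hl => ?_)
        have hg := (KV_geom_facts r l n hr0 hr1 hn hl M hM).2.2
        dsimp only
        rw [hqeval, hK₂]
        exact hg
      calc ∫ x, (max (1-x) M⁻¹)⁻¹ ∂μ ≤ K₂ * A := hHA
        _ ≤ K₂ * (C₀^2 * K₁) := mul_le_mul_of_nonneg_left hACK hK₂0
        _ = C₀^2 * K₁ * K₂ := by ring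
    -- limit n → ∞
    have step2 : ∀ r : ℝ, r ∈ Set.Ioo (0:ℝ) 1 →
        ∫ x, (max (1-x) M⁻¹)⁻¹ ∂μ ≤ C₀^2 * (2/(1+r)) * (1+(1-r)*M) := by
      rintro r ⟨hr0, hr1⟩
      have t : Tendsto (fun n : ℕ => r ^ n) atTop (nhds 0) :=
        tendsto_pow_atTop_nhds_zero_of_lt_one hr0.le hr1
      have h1 : Tendsto (fun n : ℕ => C₀^2 * (2*(1+r^n)/(1+r)) * ((1+(1-r)*M)/(1-r^n))) atTop
          (nhds (C₀^2 * (2*(1+0)/(1+r)) * ((1+(1-r)*M)/(1-0)))) := by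
        apply Tendsto.mul
        · exact (((tendsto_const_nhds.add t).const_mul 2).div_const (1+r)).const_mul _
        · exact tendsto_const_nhds.div (tendsto_const_nhds.sub t) (by norm_num)
      have h2 : Tendsto (fun n : ℕ => C₀^2 * (2*(1+r^n)/(1+r)) * ((1+(1-r)*M)/(1-r^n))) atTop
          (nhds (C₀^2 * (2/(1+r)) * (1+(1-r)*M))) := by
        convert h1 using 2
        norm_num
      exact ge_of_tendsto h2 (eventually_atTop.mpr ⟨1, fun n hn => step1 r hr0 hr1 n hn⟩)
    -- limit r → 1⁻
    have hG : ContinuousAt (fun r : ℝ => C₀^2 * (2/(1+r)) * (1+(1-r)*M)) 1 := by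
      apply ContinuousAt.mul
      · exact continuousAt_const.mul (continuousAt_const.div
          (continuousAt_const.add continuousAt_id) (by norm_num))
      · fun_prop
    have ht : Tendsto (fun r : ℝ => C₀^2 * (2/(1+r)) * (1+(1-r)*M))
        (nhdsWithin 1 (Set.Iio 1)) (nhds (C₀^2)) := by
      have := hG.tendsto.mono_left (nhdsWithin_le_nhds (s := Set.Iio 1))
      convert this using 2
      norm_num
    refine ge_of_tendsto ht ?_
    filter_upwards [Ioo_mem_nhdsLT_of_mem (by norm_num : (1:ℝ) ∈ Set.Ioc 0 1)] with r hr
    exact step2 r hr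
  -- pass to the lintegral via monotone convergence
  have hcongr : ∀ᵐ l ∂μ, (ENNReal.ofReal (1 - l))⁻¹
      = ⨆ m : ℕ, ENNReal.ofReal ((max (1-l) ((m:ℝ)+1)⁻¹)⁻¹) := by
    refine hae.mono fun l hl => ?_
    rcases (by linarith [hl.2] : (0:ℝ) ≤ 1 - l).eq_or_lt with h0 | h0
    · rw [← h0]
      simp only [ENNReal.ofReal_zero, ENNReal.inv_zero]
      refine (eq_top_iff.mpr ?_).symm
      rw [← ENNReal.iSup_natCast]
      refine iSup_mono fun k => ?_
      have hmax : max (0:ℝ) ((k:ℝ)+1)⁻¹ = ((k:ℝ)+1)⁻¹ :=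
        max_eq_right (by positivity)
      rw [hmax, inv_inv]
      rw [← ENNReal.ofReal_natCast k]
      exact ENNReal.ofReal_le_ofReal (by linarith)
    · rw [← ENNReal.ofReal_inv_of_pos h0]
      apply le_antisymm
      · obtain ⟨k, hk⟩ := exists_nat_gt (1 - l)⁻¹
        have hk' : ((k:ℝ)+1)⁻¹ ≤ 1 - l := by
          rw [inv_le_comm₀ (by positivity) h0]
          linarith
        refine le_iSup_of_le k (le_of_eq ?_)
        rw [max_eq_left hk']
      · refine iSup_le fun m => ENNReal.ofReal_le_ofReal ?_
        exact inv_anti₀ h0 (le_max_left _ _)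
  rw [lintegral_congr_ae hcongr]
  have hmono : ∀ l : ℝ, Monotone fun m : ℕ =>
      ENNReal.ofReal ((max (1-l) ((m:ℝ)+1)⁻¹)⁻¹) := by
    intro l m₁ m₂ hm
    apply ENNReal.ofReal_le_ofReal
    apply inv_anti₀
    · exact lt_max_of_lt_right (by positivity)
    · exact max_le_max le_rfl (by
        apply inv_anti₀ (by positivity)
        have : (m₁:ℝ) ≤ m₂ := Nat.cast_le.mpr hm
        linarith)
  rw [lintegral_iSup' (fun m => ((hcont ((m:ℝ)+1) (by positivity)).measurable.ennreal_ofReal).aemeasurable)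
    (ae_of_all _ fun l => hmono l)]
  refine iSup_le fun m => ?_
  rw [← MeasureTheory.ofReal_integral_eq_lintegral_ofReal (hIntH ((m:ℝ)+1) (by positivity))
    (ae_of_all _ fun x => inv_nonneg.mpr (le_max_of_le_right (by positivity)))]
  exact ENNReal.ofReal_le_ofReal (key ((m:ℝ)+1) (by linarith [Nat.cast_nonneg (α := ℝ) m]))
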